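/- Let G be a finite group and φ an automorphism of G such that G = [G, φ]. If N is a central φ-invariant subgroup of G such that G/N has order at most c and the minimal right Engel sink of φ in G⟨φ⟩ has cardinality m, then |G| is bounded in terms of c and m. (Concretely: |G'| is bounded in terms of c by Schur's theorem, and |G/G'| ≤ m since G/G' is abelian with G/G' = [G/G', φ].) -/

import Mathlib

open scoped commutatorElement
/-- Iterated left Engel commutator `[x, _n h]`, with `[x, _0 h] = x`. -/
def lEngel {H : Type} [Group H] (h : H) : H → ℕ → H
  | x, 0 => x
  | x, n + 1 => ⁅lEngel h x n, h⁆

/-- Iterated right Engel commutator `[a, _n x]`, with `[a, _0 x] = a`. -/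
def rEngel {H : Type} [Group H] (a : H) : H → ℕ → H
  | _, 0 => a
  | x, n + 1 => ⁅rEngel a x n, x⁆

/-- A left Engel sink of `h`. -/
def IsLeftEngelSink {H : Type} [Group H] (h : H) (L : Set H) : Prop :=
  ∀ x : H, ∃ N : ℕ, ∀ n ≥ N, lEngel h x n ∈ L

/-- The minimal left Engel sink of `h`. -/
def IsMinLeftEngelSink {H : Type} [Group H] (h : H) (L : Set H) : Prop :=
  IsLeftEngelSink h L ∧ ∀ L' : Set H, IsLeftEngelSink h L' → L ⊆ L'

/-- A right Engel sink of `a`. -/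
def IsRightEngelSink {H : Type} [Group H] (a : H) (R : Set H) : Prop :=
  ∀ x : H, ∃ N : ℕ, ∀ n ≥ N, rEngel a x n ∈ R

/-- The minimal right Engel sink of `a`. -/
def IsMinRightEngelSink {H : Type} [Group H] (a : H) (R : Set H) : Prop :=
  IsRightEngelSink a R ∧ ∀ R' : Set H, IsRightEngelSink a R' → R ⊆ R'

/-- If `φ` is an automorphism of a finite group `G` with `G = [G, φ]` (modelled inside
`H = G⟨φ⟩`), and `N` is a central `φ`-invariant subgroup of `G` with `|G/N| ≤ c`, and
the minimal right Engel sink of `φ` in `H` has cardinality `m`, then `|G|` is bounded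
in terms of `c` and `m`. -/
lemma stmt15_comm_central {K : Type*} [Group K] {z w : K} (hz : z ∈ Subgroup.center K)
    (hw : w ∈ Subgroup.center K) (g h : K) : ⁅g * z, h * w⁆ = ⁅g, h⁆ := by
  have hz' : ∀ x : K, z * x = x * z := fun x => (Subgroup.mem_center_iff.mp hz x).symm
  have hw' : ∀ x : K, w * x = x * w := fun x => (Subgroup.mem_center_iff.mp hw x).symm
  simp only [commutatorElement_def, mul_inv_rev]
  calc g * z * (h * w) * (z⁻¹ * g⁻¹) * (w⁻¹ * h⁻¹)
      = g * (z * (h * w) * z⁻¹) * g⁻¹ * (w⁻¹ * h⁻¹) := by group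
    _ = g * (h * w) * g⁻¹ * (w⁻¹ * h⁻¹) := by rw [hz' (h*w)]; group
    _ = g * h * (w * g⁻¹ * w⁻¹) * h⁻¹ := by group
    _ = g * h * g⁻¹ * h⁻¹ := by rw [hw' g⁻¹]; group

lemma stmt15_commSet_bound (K : Type*) [Group K] [Finite K] :
    Nat.card (commutatorSet K) ≤ (Subgroup.center K).index ^ 2 := by
  set Z := Subgroup.center K
  have hsurj : Function.Surjective (fun p : (K ⧸ Z) × (K ⧸ Z) =>
      (⟨⁅p.1.out, p.2.out⁆, commutator_mem_commutatorSet _ _⟩ : commutatorSet K)) := by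
    rintro ⟨x, g, h, rfl⟩
    refine ⟨(QuotientGroup.mk g, QuotientGroup.mk h), ?_⟩
    apply Subtype.ext
    show ⁅_, _⁆ = ⁅g, h⁆
    obtain ⟨⟨z, hz⟩, hz'⟩ := QuotientGroup.mk_out_eq_mul Z g
    obtain ⟨⟨w, hw⟩, hw'⟩ := QuotientGroup.mk_out_eq_mul Z h
    rw [hz', hw', stmt15_comm_central hz hw]
  calc Nat.card (commutatorSet K) ≤ Nat.card ((K ⧸ Z) × (K ⧸ Z)) :=
        Nat.card_le_card_of_surjective _ hsurj
    _ = Z.index ^ 2 := by simp [Nat.card_prod, sq, Subgroup.index]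


theorem stmt15 (c m : ℕ) : ∃ B : ℕ,
    ∀ (H : Type) (_ : Group H) (_ : Finite H) (G : Subgroup H) (_ : G.Normal)
      (φ : H) (N : Subgroup H) (R : Set H),
      G ⊔ Subgroup.zpowers φ = ⊤ →
      Subgroup.closure {x : H | ∃ g ∈ G, x = ⁅g, φ⁆} = G →
      N ≤ G → (∀ n ∈ N, ∀ g ∈ G, n * g = g * n) → (∀ n ∈ N, φ * n * φ⁻¹ ∈ N) →
      N.relIndex G ≤ c →
      IsMinRightEngelSink φ R → Nat.card R = m →
      Nat.card G ≤ B := by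
  refine ⟨c ^ (c * c ^ 2 + 1) * m, ?_⟩
  intro H _ _ G hGN φ N R _ hGen hNG hNcent _ hrel hSink hcardR
  classical
  -- the conjugation action of φ on G
  have hconj : ∀ g : H, g ∈ G → φ * g * φ⁻¹ ∈ G := fun g hg => hGN.conj_mem g hg φ
  let σ : ↥G →* ↥G :=
    { toFun := fun g => ⟨φ * (g : H) * φ⁻¹, hconj _ g.2⟩
      map_one' := by ext; simp
      map_mul' := fun g h => by ext; show φ * (↑g * ↑h) * φ⁻¹ = _; simp }
  let π : ↥G →* Abelianization ↥G := Abelianization.of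
  have hπs : Function.Surjective π := QuotientGroup.mk_surjective
  let σ' : Abelianization ↥G →* Abelianization ↥G := Abelianization.lift (π.comp σ)
  have hσ' : ∀ g : ↥G, σ' (π g) = π (σ g) := fun g => rfl
  let θ : Abelianization ↥G →* Abelianization ↥G :=
    { toFun := fun a => a * (σ' a)⁻¹
      map_one' := by simp
      map_mul' := fun a b => by
        simp only [map_mul, mul_inv_rev]
        rw [mul_comm (σ' b)⁻¹ (σ' a)⁻¹, mul_mul_mul_comm] }
  have hθ : ∀ a, θ a = a * (σ' a)⁻¹ := fun a => rfl
  -- θ is surjective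
  have hθs : Function.Surjective θ := by
    have hT : G ≤ Subgroup.map G.subtype ((θ.range).comap π) := by
      have hsub : {x : H | ∃ g ∈ G, x = ⁅g, φ⁆} ⊆
          ↑(Subgroup.map G.subtype ((θ.range).comap π)) := by
        rintro x ⟨g, hg, rfl⟩
        have hg1 : ⁅g, φ⁆ ∈ G := by
          have : ⁅g, φ⁆ = g * (φ * g⁻¹ * φ⁻¹) := by group
          rw [this]; exact G.mul_mem hg (hconj _ (G.inv_mem hg))
        refine ⟨⟨⁅g, φ⁆, hg1⟩, ?_, rfl⟩
        have key : (⟨⁅g, φ⁆, hg1⟩ : ↥G) = ⟨g, hg⟩ * (σ ⟨g, hg⟩)⁻¹ := by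
          ext; show ⁅g, φ⁆ = g * (φ * g * φ⁻¹)⁻¹; group
        refine ⟨π ⟨g, hg⟩, ?_⟩
        rw [hθ, hσ', ← map_inv, ← map_mul, ← key]
      have := (Subgroup.closure_le _).mpr hsub
      rwa [hGen] at this
    intro a
    obtain ⟨x, hx⟩ := hπs a
    obtain ⟨y, hy, hyx⟩ := hT x.2
    have : y = x := Subtype.ext hyx
    subst this
    obtain ⟨b, hb⟩ := hy
    exact ⟨b, hb.trans hx⟩
  have hθi : Function.Injective θ := Finite.injective_iff_surjective.mpr hθs
  -- the "reduction mod commutator" map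
  set F : H → Abelianization ↥G := fun h => if hh : h ∈ G then π ⟨h, hh⟩ else 1 with hF
  have hFeq : ∀ (h : H) (hh : h ∈ G), F h = π ⟨h, hh⟩ := fun h hh => dif_pos hh
  -- every element of the abelianization is hit by F on R
  have key : ∀ a : Abelianization ↥G, ∃ r ∈ R, F r = a := by
    intro a
    obtain ⟨b, hb⟩ := hθs a⁻¹
    obtain ⟨g, hg⟩ := hπs b
    set x : H := (g : H) * φ with hx
    -- membership of the Engel commutators in G
    have hmem : ∀ n : ℕ, rEngel φ x (n + 1) ∈ G := by
      intro n
      induction n with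
      | zero =>
        show ⁅rEngel φ x 0, x⁆ ∈ G
        have : ⁅rEngel φ x 0, x⁆ = (φ * ↑g * φ⁻¹) * (↑g)⁻¹ := by
          show ⁅φ, (g : H) * φ⁆ = _; group
        rw [this]; exact G.mul_mem (hconj _ g.2) (G.inv_mem g.2)
      | succ n ih =>
        show ⁅rEngel φ x (n + 1), x⁆ ∈ G
        have : ⁅rEngel φ x (n + 1), x⁆ =
            rEngel φ x (n + 1) * (x * (rEngel φ x (n + 1))⁻¹ * x⁻¹) := by group
        rw [this]
        exact G.mul_mem ih (hGN.conj_mem _ (G.inv_mem ih) x)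
    -- the first Engel commutator maps to a
    have hr1 : F (rEngel φ x 1) = a := by
      rw [hFeq _ (hmem 0)]
      have e1 : (⟨rEngel φ x 1, hmem 0⟩ : ↥G) = σ g * g⁻¹ := by
        ext; show ⁅φ, (g : H) * φ⁆ = (φ * ↑g * φ⁻¹) * (↑g)⁻¹; group
      rw [e1, map_mul, map_inv, ← hσ', hg]
      have : σ' b * b⁻¹ = (θ b)⁻¹ := by rw [hθ]; simp [mul_comm]
      rw [this, hb, inv_inv]
    -- the recursion: F (r_{n+1}) = θ^[n] a
    have hval : ∀ n : ℕ, F (rEngel φ x (n + 1)) = θ^[n] a := by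
      intro n
      induction n with
      | zero => simpa using hr1
      | succ n ih =>
        have hrG := hmem n
        set r : H := rEngel φ x (n + 1) with hr
        have estep : (⟨⁅r, x⁆, hmem (n + 1)⟩ : ↥G) =
            ⟨r, hrG⟩ * g * (σ ⟨r, hrG⟩)⁻¹ * g⁻¹ := by
          ext
          show ⁅r, (g : H) * φ⁆ = r * ↑g * (φ * r * φ⁻¹)⁻¹ * (↑g)⁻¹
          group
        have : F (rEngel φ x (n + 2)) = θ (F r) := by
          rw [hFeq _ (hmem (n + 1)), hFeq _ hrG]
          show π (⟨⁅r, x⁆, hmem (n+1)⟩ : ↥G) = θ (π ⟨r, hrG⟩)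
          rw [estep, map_mul, map_mul, map_mul, map_inv, map_inv, ← hσ', hθ]
          have : ∀ u v : Abelianization ↥G, u * v * (σ' u)⁻¹ * v⁻¹ = u * (σ' u)⁻¹ := by
            intro u v
            rw [mul_right_comm u v (σ' u)⁻¹, mul_inv_cancel_right]
          exact this _ _
        rw [this, ih, ← Function.iterate_succ_apply' θ n a]
    -- periodicity of the θ-orbit of a
    obtain ⟨i, j, hij, hsame⟩ : ∃ i j : ℕ, i < j ∧ θ^[i] a = θ^[j] a := by
      obtain ⟨i, j, hne, hsame⟩ := Finite.exists_ne_map_eq_of_infinite (fun n : ℕ => θ^[n] a)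
      rcases lt_or_gt_of_ne hne with h | h
      · exact ⟨i, j, h, hsame⟩
      · exact ⟨j, i, h, hsame.symm⟩
    set d := j - i with hd
    have hd1 : 1 ≤ d := Nat.sub_pos_of_lt hij
    have hfix : θ^[d] a = a := by
      have : θ^[i] (θ^[d] a) = θ^[i] a := by
        rw [← Function.iterate_add_apply, hd, Nat.add_sub_cancel' hij.le, ← hsame]
      exact (Function.Injective.iterate hθi i) this
    have hper : ∀ k : ℕ, θ^[k * d] a = a := by
      intro k
      induction k with
      | zero => simp
      | succ k ih => rw [Nat.succ_mul, Function.iterate_add_apply, hfix, ih]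
    -- pick a far enough point in the orbit, inside the sink
    obtain ⟨Nx, hNx⟩ := hSink.1 x
    refine ⟨rEngel φ x (Nx * d + 1), hNx _ ?_, by rw [hval, hper]⟩
    calc Nx = Nx * 1 := (Nat.mul_one Nx).symm
      _ ≤ Nx * d := Nat.mul_le_mul_left Nx hd1
      _ ≤ Nx * d + 1 := Nat.le_succ _
  -- |G/G'| ≤ m
  have habm : Nat.card (Abelianization ↥G) ≤ m := by
    have hsurj : Function.Surjective (fun r : R => F r) := by
      intro a
      obtain ⟨r, hr, hra⟩ := key a
      exact ⟨⟨r, hr⟩, hra⟩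
    calc Nat.card (Abelianization ↥G) ≤ Nat.card R :=
          Nat.card_le_card_of_surjective _ hsurj
      _ = m := hcardR
  -- Schur: |G'| bounded in terms of c
  have hZind : (Subgroup.center ↥G).index ≤ c := by
    have hle : N.subgroupOf G ≤ Subgroup.center ↥G := by
      rintro ⟨g, hg⟩ hn
      rw [Subgroup.mem_subgroupOf] at hn
      exact Subgroup.mem_center_iff.mpr fun ⟨k, hk⟩ =>
        Subtype.ext ((hNcent g hn k hk).symm)
    have hdvd : (Subgroup.center ↥G).index ∣ (N.subgroupOf G).index :=
      Subgroup.index_dvd_of_le hle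
    have hpos : 0 < (N.subgroupOf G).index :=
      Nat.pos_of_ne_zero (Subgroup.index_ne_zero_of_finite)
    exact (Nat.le_of_dvd hpos hdvd).trans hrel
  have hZpos : 1 ≤ (Subgroup.center ↥G).index :=
    Nat.pos_of_ne_zero (Subgroup.index_ne_zero_of_finite)
  have hc1 : 1 ≤ c := hZpos.trans hZind
  have hcomm : Nat.card (commutator ↥G) ≤ c ^ (c * c ^ 2 + 1) := by
    have h1 := Subgroup.card_commutator_dvd_index_center_pow ↥G
    have h2 := stmt15_commSet_bound ↥G
    have hexp : (Subgroup.center ↥G).index * Nat.card (commutatorSet ↥G) + 1 ≤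
        c * c ^ 2 + 1 := by
      have := Nat.mul_le_mul hZind (h2.trans (Nat.pow_le_pow_left hZind 2))
      omega
    calc Nat.card (commutator ↥G)
        ≤ (Subgroup.center ↥G).index ^
          ((Subgroup.center ↥G).index * Nat.card (commutatorSet ↥G) + 1) :=
          Nat.le_of_dvd (Nat.pow_pos hZpos) h1
      _ ≤ c ^ ((Subgroup.center ↥G).index * Nat.card (commutatorSet ↥G) + 1) :=
          Nat.pow_le_pow_left hZind _
      _ ≤ c ^ (c * c ^ 2 + 1) := Nat.pow_le_pow_right hc1 hexp
  -- combine
  have hsplit : Nat.card (commutator ↥G) * (commutator ↥G).index = Nat.card ↥G :=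
    Subgroup.card_mul_index _
  have hindex : (commutator ↥G).index = Nat.card (Abelianization ↥G) := rfl
  calc Nat.card ↥G = Nat.card (commutator ↥G) * (commutator ↥G).index := hsplit.symm
    _ ≤ c ^ (c * c ^ 2 + 1) * m := by
        rw [hindex]; exact Nat.mul_le_mul hcomm habm
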